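/- Let X = (int B^{d+1}) \ (1−ε)B^{d+1} be an open spherical shell in ℝ^{d+1} with d ≥ 2 and 0 < ε < 1, and let Z₁, …, Z_k be pairwise disjoint closed subsets of X such that X \ Z_i is connected for every i. Then X \ (Z₁ ∪ … ∪ Z_k) is connected. -/

import Mathlib

open Set Metric Complex Filter

section helpers

variable {α : Type*} [MetricSpace α] {β : Type*} [MetricSpace β]

/-- Squeeze lemma: a function that pointwise agrees with one of two functions that
are continuous and agree at the point is continuous at that point. -/
lemma sq_helper {F₁ F₂ c : α → β} {s : Set α} {x₀ : α}
    (h₁ : ContinuousWithinAt F₁ s x₀) (h₂ : ContinuousWithinAt F₂ s x₀)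
    (hc : ∀ x ∈ s, c x = F₁ x ∨ c x = F₂ x)
    (he : F₁ x₀ = F₂ x₀) (hcx : c x₀ = F₁ x₀) :
    ContinuousWithinAt c s x₀ := by
  rw [ContinuousWithinAt] at h₁ h₂ ⊢
  rw [tendsto_iff_dist_tendsto_zero]
  have hd1 : Tendsto (fun x => dist (F₁ x) (c x₀)) (nhdsWithin x₀ s) (nhds 0) := by
    have h := h₁.dist (tendsto_const_nhds (x := c x₀) (f := nhdsWithin x₀ s))
    simpa [hcx, dist_self] using h
  have hd2 : Tendsto (fun x => dist (F₂ x) (c x₀)) (nhdsWithin x₀ s) (nhds 0) := by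
    have h := h₂.dist (tendsto_const_nhds (x := c x₀) (f := nhdsWithin x₀ s))
    simpa [hcx, he, dist_self] using h
  have hsum : Tendsto (fun x => dist (F₁ x) (c x₀) + dist (F₂ x) (c x₀))
      (nhdsWithin x₀ s) (nhds 0) := by simpa using hd1.add hd2
  refine squeeze_zero' ?_ ?_ hsum
  · exact Eventually.of_forall fun x => dist_nonneg
  · filter_upwards [self_mem_nhdsWithin] with x hx
    rcases hc x hx with h | h
    · rw [h]; nlinarith [dist_nonneg (x := F₂ x) (y := c x₀)]
    · rw [h]; nlinarith [dist_nonneg (x := F₁ x) (y := c x₀)]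

/-- A continuous integer-valued function on a preconnected set is constant. -/
lemma int_const {F : α → ℝ} {s : Set α} (hs : IsPreconnected s)
    (hF : ContinuousOn F s) (hint : ∀ x ∈ s, ∃ m : ℤ, F x = m) :
    ∀ x ∈ s, ∀ y ∈ s, F x = F y := by
  intro x hx y hy
  by_contra hne
  wlog hlt : F x < F y generalizing x y
  · exact this y hy x hx (Ne.symm hne) (lt_of_le_of_ne (not_lt.1 hlt) (Ne.symm hne))
  obtain ⟨mx, hmx⟩ := hint x hx
  obtain ⟨my, hmy⟩ := hint y hy
  have him : IsPreconnected (F '' s) := hs.image F hF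
  have hmid : (mx : ℝ) + 1/2 ∈ F '' s := by
    have hsub := him.Icc_subset (mem_image_of_mem F hx) (mem_image_of_mem F hy)
    apply hsub
    constructor
    · rw [hmx]; linarith
    · rw [hmy]
      have : mx < my := by exact_mod_cast hmx ▸ hmy ▸ hlt
      have : (mx : ℝ) + 1 ≤ my := by exact_mod_cast this
      linarith
  obtain ⟨w, hw, hFw⟩ := hmid
  obtain ⟨mw, hmw⟩ := hint w hw
  rw [hmw] at hFw
  have : (2 * mw : ℝ) = 2 * mx + 1 := by linarith
  have : 2 * mw = 2 * mx + 1 := by exact_mod_cast this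
  omega

/-- A continuous function on a preconnected set taking values in `2πiℤ` is constant. -/
lemma int_const_complex {F : α → ℂ} {s : Set α} (hs : IsPreconnected s)
    (hF : ContinuousOn F s) (hint : ∀ x ∈ s, ∃ m : ℤ, F x = m * (2 * Real.pi * I)) :
    ∀ x ∈ s, ∀ y ∈ s, F x = F y := by
  intro x hx y hy
  have him : ContinuousOn (fun z => (F z).im / (2 * Real.pi)) s :=
    (Complex.continuous_im.comp_continuousOn hF).div_const _
  have hi : ∀ z ∈ s, ∃ m : ℤ, (F z).im / (2 * Real.pi) = m := by
    intro z hz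
    obtain ⟨m, hm⟩ := hint z hz
    refine ⟨m, ?_⟩
    rw [hm]
    have : ((m : ℂ) * (2 * Real.pi * I)).im = m * (2 * Real.pi) := by
      simp [Complex.mul_im]
    rw [this]
    field_simp
  have := int_const hs him hi x hx y hy
  obtain ⟨mx, hmx⟩ := hint x hx
  obtain ⟨my, hmy⟩ := hint y hy
  rw [hmx, hmy] at this ⊢
  have hmm : ((mx : ℂ) * (2 * Real.pi * I)).im = mx * (2 * Real.pi) := by simp [Complex.mul_im]
  have hmm' : ((my : ℂ) * (2 * Real.pi * I)).im = my * (2 * Real.pi) := by simp [Complex.mul_im]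
  rw [hmm, hmm'] at this
  have hpi : (0:ℝ) < 2 * Real.pi := by positivity
  have hpi' : (2 * Real.pi) ≠ 0 := hpi.ne'
  have hxy : (mx : ℝ) = my := by
    field_simp at this; exact_mod_cast this
  have : mx = my := by exact_mod_cast hxy
  rw [this]

end helpers

open Set Metric Complex Filter Module

section paths

variable {E : Type*} [NormedAddCommGroup E] [InnerProductSpace ℝ E] [FiniteDimensional ℝ E]

lemma exists_perp (x : E) (T : Submodule ℝ E) (hT : 2 ≤ finrank ℝ T) :
    ∃ z, z ∈ T ∧ inner ℝ x z = (0:ℝ) ∧ z ≠ 0 := by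
  set φ : T →ₗ[ℝ] ℝ := (innerSL ℝ x).toLinearMap.comp T.subtype with hφ
  by_cases hker : LinearMap.ker φ = ⊥
  · exfalso
    have hinj : Function.Injective φ := LinearMap.ker_eq_bot.1 hker
    have h1 : finrank ℝ T = finrank ℝ (LinearMap.range φ) :=
      (LinearMap.finrank_range_of_inj hinj).symm
    have h2 : finrank ℝ (LinearMap.range φ) ≤ finrank ℝ ℝ := Submodule.finrank_le _
    rw [finrank_self] at h2
    omega
  · obtain ⟨v, hv, hv0⟩ := Submodule.exists_mem_ne_zero_of_ne_bot hker
    refine ⟨(v : E), v.2, ?_, ?_⟩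
    · simpa [hφ] using hv
    · simpa using hv0

lemma joined_sphere_of_ne_neg (T : Submodule ℝ E) {r : ℝ} (hr : 0 < r)
    {x y : E} (hx : x ∈ T) (hy : y ∈ T) (hxr : ‖x‖ = r) (hyr : ‖y‖ = r)
    (hne : x ≠ -y) : JoinedIn {z | z ∈ T ∧ ‖z‖ = r} x y := by
  have hx0 : x ≠ 0 := by intro h; rw [h] at hxr; simp at hxr; linarith
  have hy0 : y ≠ 0 := by intro h; rw [h] at hyr; simp at hyr; linarith
  set ψ : ℝ → E := fun t => (1 - t) • x + t • y with hψdef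
  have hψ : ∀ t : ℝ, t ∈ Icc (0:ℝ) 1 → ψ t ≠ 0 := by
    intro t ht h0
    have hnorm : ‖(1 - t) • x‖ = ‖t • y‖ := by
      have : (1 - t) • x = -(t • y) := by
        have := h0; rw [hψdef] at this; simp only at this
        linear_combination (norm := module) this
      rw [this, norm_neg]
    rw [norm_smul, norm_smul, hxr, hyr, Real.norm_eq_abs, Real.norm_eq_abs,
      _root_.abs_of_nonneg (by linarith [ht.2] : (0:ℝ) ≤ 1 - t),
      _root_.abs_of_nonneg ht.1] at hnorm
    have ht2 : t = 1/2 := by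
      have := mul_right_cancel₀ hr.ne' hnorm
      linarith
    apply hne
    rw [hψdef] at h0; simp only [ht2] at h0
    have : x + y = 0 := by
      have h2 := congrArg (fun v => (2:ℝ) • v) h0
      simp only [smul_add, smul_smul] at h2
      norm_num at h2
      linear_combination (norm := module) h2
    linear_combination (norm := module) this
  have hcont : Continuous fun t : unitInterval => (r / ‖ψ t‖) • ψ t := by
    have hψc : Continuous fun t : unitInterval => ψ (t : ℝ) := by
      apply Continuous.add
      · exact (continuous_const.sub continuous_subtype_val).smul continuous_const
      · exact continuous_subtype_val.smul continuous_const
    refine Continuous.smul ?_ hψc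
    refine continuous_const.div (continuous_norm.comp hψc) ?_
    intro t
    exact norm_ne_zero_iff.2 (hψ t t.2)
  have hmem : ∀ t : unitInterval, (r / ‖ψ (t:ℝ)‖) • ψ (t:ℝ) ∈ {z | z ∈ T ∧ ‖z‖ = r} := by
    intro t
    have hψT : ψ (t:ℝ) ∈ T := T.add_mem (T.smul_mem _ hx) (T.smul_mem _ hy)
    have hψ0 : ψ (t:ℝ) ≠ 0 := hψ t t.2
    have hψn : (0:ℝ) < ‖ψ (t:ℝ)‖ := norm_pos_iff.2 hψ0
    refine ⟨T.smul_mem _ hψT, ?_⟩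
    rw [norm_smul, Real.norm_eq_abs, _root_.abs_of_pos (by positivity), div_mul_cancel₀ _ hψn.ne']
  refine ⟨⟨⟨fun t => (r / ‖ψ (t:ℝ)‖) • ψ (t:ℝ), hcont⟩, ?_, ?_⟩, fun t => hmem t⟩
  · show (r / ‖ψ (0:ℝ)‖) • ψ (0:ℝ) = x
    have : ψ (0:ℝ) = x := by rw [hψdef]; simp
    rw [this, hxr, div_self hr.ne', one_smul]
  · show (r / ‖ψ (1:ℝ)‖) • ψ (1:ℝ) = y
    have : ψ (1:ℝ) = y := by rw [hψdef]; simp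
    rw [this, hyr, div_self hr.ne', one_smul]

lemma joined_sphere (T : Submodule ℝ E) (hT : 2 ≤ finrank ℝ T) {r : ℝ} (hr : 0 < r)
    {x y : E} (hx : x ∈ T) (hy : y ∈ T) (hxr : ‖x‖ = r) (hyr : ‖y‖ = r) :
    JoinedIn {z | z ∈ T ∧ ‖z‖ = r} x y := by
  by_cases hne : x = -y
  · obtain ⟨z, hzT, hzperp, hz0⟩ := exists_perp x T hT
    have hzn : (0:ℝ) < ‖z‖ := norm_pos_iff.2 hz0
    set z' : E := (r / ‖z‖) • z with hz'
    have hz'T : z' ∈ T := T.smul_mem _ hzT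
    have hz'r : ‖z'‖ = r := by
      rw [hz', norm_smul, Real.norm_eq_abs, _root_.abs_of_pos (by positivity),
        div_mul_cancel₀ _ hzn.ne']
    have hxz' : inner ℝ x z' = (0:ℝ) := by
      rw [hz', inner_smul_right, hzperp, mul_zero]
    have hr2 : inner ℝ x x = (r^2 : ℝ) := by
      rw [real_inner_self_eq_norm_sq, hxr]
    have h1 : x ≠ -z' := by
      intro h
      have : inner ℝ x z' = (-(r^2) : ℝ) := by
        have : z' = -x := by rw [h]; simp
        rw [this, inner_neg_right, hr2]
      rw [hxz'] at this; nlinarith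
    have h2 : z' ≠ -y := by
      intro h
      have hyx : -y = x := by rw [hne]
      rw [hyx] at h
      rw [h] at hxz'
      rw [hr2] at hxz'; nlinarith
    exact (joined_sphere_of_ne_neg T hr hx hz'T hxr hz'r h1).trans
      (joined_sphere_of_ne_neg T hr hz'T hy hz'r hyr h2)
  · exact joined_sphere_of_ne_neg T hr hx hy hxr hyr hne

lemma joined_window (T : Submodule ℝ E) (hT : 2 ≤ finrank ℝ T) {s : Set ℝ}
    (hs : s.OrdConnected) (hpos : ∀ u ∈ s, (0:ℝ) < u)
    {x y : E} (hxT : x ∈ T) (hyT : y ∈ T) (hxs : ‖x‖ ∈ s) (hys : ‖y‖ ∈ s) :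
    JoinedIn {z | z ∈ T ∧ ‖z‖ ∈ s} x y := by
  have hxn : (0:ℝ) < ‖x‖ := hpos _ hxs
  have hyn : (0:ℝ) < ‖y‖ := hpos _ hys
  have hx0 : x ≠ 0 := norm_pos_iff.1 hxn
  set x' : E := (‖y‖ / ‖x‖) • x with hx'
  have hcomb : ∀ t : ℝ, t ∈ Icc (0:ℝ) 1 → (1 - t) * ‖x‖ + t * ‖y‖ ∈ s := by
    intro t ht
    have := hs.uIcc_subset hxs hys
    apply this
    rcases le_total ‖x‖ ‖y‖ with h | h
    · apply Set.Icc_subset_uIcc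
      constructor <;> nlinarith [ht.1, ht.2]
    · apply Set.Icc_subset_uIcc'
      constructor <;> nlinarith [ht.1, ht.2]
  -- radial path from x to x'
  have hleg1 : JoinedIn {z | z ∈ T ∧ ‖z‖ ∈ s} x x' := by
    have hcont : Continuous fun t : unitInterval =>
        ((((1:ℝ) - t) * ‖x‖ + (t:ℝ) * ‖y‖) / ‖x‖) • x := by
      refine Continuous.smul ?_ continuous_const
      refine Continuous.div ?_ continuous_const (fun _ => hxn.ne')
      exact ((continuous_const.sub continuous_subtype_val).mul continuous_const).add
        (continuous_subtype_val.mul continuous_const)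
    refine ⟨⟨⟨fun t => ((((1:ℝ) - t) * ‖x‖ + (t:ℝ) * ‖y‖) / ‖x‖) • x, hcont⟩, ?_, ?_⟩, ?_⟩
    · show ((((1:ℝ) - 0) * ‖x‖ + (0:ℝ) * ‖y‖) / ‖x‖) • x = x
      rw [show ((1:ℝ) - 0) * ‖x‖ + (0:ℝ) * ‖y‖ = ‖x‖ by ring, div_self hxn.ne', one_smul]
    · show ((((1:ℝ) - 1) * ‖x‖ + (1:ℝ) * ‖y‖) / ‖x‖) • x = x'
      rw [hx']; congr 1; ring
    · intro t
      have hc : (0:ℝ) < (1 - (t:ℝ)) * ‖x‖ + (t:ℝ) * ‖y‖ := by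
        have h1 : (1 - (t:ℝ)) * min ‖x‖ ‖y‖ ≤ (1 - (t:ℝ)) * ‖x‖ :=
          mul_le_mul_of_nonneg_left (min_le_left _ _) (by linarith [t.2.2])
        have h2 : (t:ℝ) * min ‖x‖ ‖y‖ ≤ (t:ℝ) * ‖y‖ :=
          mul_le_mul_of_nonneg_left (min_le_right _ _) t.2.1
        have hm : 0 < min ‖x‖ ‖y‖ := lt_min hxn hyn
        nlinarith
      show ((((1:ℝ) - t) * ‖x‖ + (t:ℝ) * ‖y‖) / ‖x‖) • x ∈ {z | z ∈ T ∧ ‖z‖ ∈ s}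
      refine ⟨T.smul_mem _ hxT, ?_⟩
      rw [norm_smul, Real.norm_eq_abs, _root_.abs_of_pos (by positivity), div_mul_cancel₀ _ hxn.ne']
      exact hcomb _ t.2
  have hx'T : x' ∈ T := T.smul_mem _ hxT
  have hx'n : ‖x'‖ = ‖y‖ := by
    rw [hx', norm_smul, Real.norm_eq_abs, _root_.abs_of_pos (by positivity),
      div_mul_cancel₀ _ hxn.ne']
  have hleg2 : JoinedIn {z | z ∈ T ∧ ‖z‖ ∈ s} x' y := by
    have hsp := joined_sphere T hT hyn hx'T hyT hx'n rfl
    refine hsp.mono fun z hz => ⟨hz.1, ?_⟩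
    rw [hz.2]; exact hys
  exact hleg1.trans hleg2

end paths

open Set Metric Complex Filter

section lifting

variable {α : Type*} [MetricSpace α]

/-- Lift along a contraction: if a compact set contracts to a point within itself,
every nonvanishing continuous function on it has a continuous logarithm. -/
lemma cone_lift {K : Set α} (hK : IsCompact K) {f : α → ℂ}
    (hf : ContinuousOn f K) (h0 : ∀ x ∈ K, f x ≠ 0) {p : α} {Φ : α → ℝ → α}
    (hΦc : ContinuousOn (fun q : α × ℝ => Φ q.1 q.2) (K ×ˢ Icc (0:ℝ) 1))
    (hΦm : ∀ x ∈ K, ∀ t ∈ Icc (0:ℝ) 1, Φ x t ∈ K)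
    (hΦ0 : ∀ x ∈ K, Φ x 0 = p) (hΦ1 : ∀ x ∈ K, Φ x 1 = x) :
    ∃ g : α → ℂ, ContinuousOn g K ∧ ∀ x ∈ K, Complex.exp (g x) = f x := by
  rcases K.eq_empty_or_nonempty with hemp | hne
  · exact ⟨0, by simp [hemp, continuousOn_empty], by simp [hemp]⟩
  obtain ⟨xw, hxw⟩ := hne
  have hp : p ∈ K := hΦ0 xw hxw ▸ hΦm xw hxw 0 ⟨le_refl 0, zero_le_one⟩
  -- minimum of ‖f‖ on K
  obtain ⟨x₀, hx₀K, hx₀⟩ := hK.exists_isMinOn ⟨xw, hxw⟩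
    (continuous_norm.comp_continuousOn hf)
  set m : ℝ := ‖f x₀‖ with hmdef
  have hm : 0 < m := norm_pos_iff.2 (h0 x₀ hx₀K)
  have hmle : ∀ x ∈ K, m ≤ ‖f x‖ := fun x hx => hx₀ hx
  -- uniform continuity of f ∘ Φ on K × [0,1]
  set G : α × ℝ → ℂ := fun q => f (Φ q.1 q.2) with hGdef
  have hGc : ContinuousOn G (K ×ˢ Icc (0:ℝ) 1) :=
    hf.comp hΦc fun q hq => hΦm _ hq.1 _ hq.2
  have hD : IsCompact (K ×ˢ Icc (0:ℝ) 1) := hK.prod isCompact_Icc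
  have hUC := hD.uniformContinuousOn_of_continuous hGc
  rw [Metric.uniformContinuousOn_iff] at hUC
  obtain ⟨δ, hδ0, hδ⟩ := hUC m hm
  obtain ⟨n, hn⟩ := exists_nat_one_div_lt hδ0
  set N : ℕ := n + 1 with hNdef
  have hN0 : (0:ℝ) < N := by positivity
  have hstep : (1:ℝ)/N < δ := by
    have : ((N:ℝ)) = (n:ℝ) + 1 := by exact_mod_cast rfl
    rw [this]; exact hn
  have htmem : ∀ i : ℕ, i ≤ N → (i:ℝ)/N ∈ Icc (0:ℝ) 1 := by
    intro i hi
    constructor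
    · positivity
    · rw [div_le_one hN0]; exact_mod_cast hi
  have humem : ∀ x ∈ K, ∀ i ≤ N, Φ x ((i:ℝ)/N) ∈ K := fun x hx i hi =>
    hΦm x hx _ (htmem i hi)
  have hu0 : ∀ x ∈ K, ∀ i ≤ N, f (Φ x ((i:ℝ)/N)) ≠ 0 := fun x hx i hi =>
    h0 _ (humem x hx i hi)
  have hclose : ∀ x ∈ K, ∀ i < N,
      ‖f (Φ x (((i:ℝ)+1)/N)) - f (Φ x ((i:ℝ)/N))‖ < m := by
    intro x hx i hi
    have hi1 : i + 1 ≤ N := hi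
    have h1 : ((x, ((i:ℝ)+1)/N) : α × ℝ) ∈ K ×ˢ Icc (0:ℝ) 1 := by
      refine ⟨hx, ?_⟩
      have := htmem (i+1) hi1
      rwa [Nat.cast_add, Nat.cast_one] at this
    have h2 : ((x, (i:ℝ)/N) : α × ℝ) ∈ K ×ˢ Icc (0:ℝ) 1 := ⟨hx, htmem i hi.le⟩
    have hd : dist ((x, ((i:ℝ)+1)/N) : α × ℝ) ((x, (i:ℝ)/N) : α × ℝ) < δ := by
      rw [Prod.dist_eq]
      simp only [dist_self]
      rw [Real.dist_eq]
      have he : ((i:ℝ)+1)/N - (i:ℝ)/N = 1/N := by field_simp; ring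
      rw [he, _root_.abs_of_pos (by positivity)]
      exact max_lt hδ0 hstep
    have := hδ _ h1 _ h2 hd
    rw [dist_eq_norm] at this
    simpa [hGdef] using this
  -- the quotients lie in the slit plane
  have hquot : ∀ x ∈ K, ∀ i < N,
      f (Φ x (((i:ℝ)+1)/N)) / f (Φ x ((i:ℝ)/N)) ∈ Complex.slitPlane := by
    intro x hx i hi
    set a := f (Φ x (((i:ℝ)+1)/N))
    set b := f (Φ x ((i:ℝ)/N))
    have hb0 : b ≠ 0 := hu0 x hx i hi.le
    have hbm : m ≤ ‖b‖ := hmle _ (humem x hx i hi.le)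
    have hab : ‖a - b‖ < m := hclose x hx i hi
    have hq : ‖a/b - 1‖ < 1 := by
      rw [show a/b - 1 = (a - b)/b by field_simp]
      rw [norm_div]
      rw [div_lt_one (norm_pos_iff.2 hb0)]
      exact lt_of_lt_of_le hab hbm
    left
    have h1 : (1 - (a/b)).re ≤ ‖1 - a/b‖ := by
      calc (1 - (a/b)).re ≤ ‖1 - a/b‖ := Complex.re_le_norm _
        _ = ‖1 - a/b‖ := rfl
    have h2 : ‖1 - a/b‖ = ‖a/b - 1‖ := by rw [← norm_neg]; ring_nf
    simp only [Complex.sub_re, Complex.one_re] at h1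
    have := h2 ▸ h1
    linarith
  -- the lift
  refine ⟨fun x => Complex.log (f p) + ∑ i ∈ Finset.range N,
      Complex.log (f (Φ x (((i:ℝ)+1)/N)) / f (Φ x ((i:ℝ)/N))), ?_, ?_⟩
  · apply ContinuousOn.add continuousOn_const
    apply continuousOn_finset_sum
    intro i hi
    rw [Finset.mem_range] at hi
    have hslice : ∀ t, t ∈ Icc (0:ℝ) 1 → ContinuousOn (fun x => f (Φ x t)) K := by
      intro t ht
      have hmap : MapsTo (fun x => ((x, t) : α × ℝ)) K (K ×ˢ Icc (0:ℝ) 1) :=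
        fun x hx => ⟨hx, ht⟩
      exact hGc.comp (Continuous.continuousOn (by fun_prop)) hmap
    have h1 := hslice _ (by
      have := htmem (i+1) hi
      rwa [Nat.cast_add, Nat.cast_one] at this)
    have h2 := hslice _ (htmem i hi.le)
    refine ContinuousOn.clog ?_ ?_
    · exact h1.div h2 (fun x hx => hu0 x hx i hi.le)
    · exact fun x hx => hquot x hx i hi
  · intro x hx
    have key : ∀ j ≤ N, Complex.exp (Complex.log (f p) + ∑ i ∈ Finset.range j,
        Complex.log (f (Φ x (((i:ℝ)+1)/N)) / f (Φ x ((i:ℝ)/N)))) = f (Φ x ((j:ℝ)/N)) := by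
      intro j hj
      induction j with
      | zero =>
        simp only [Finset.range_zero, Finset.sum_empty, add_zero, Nat.cast_zero, zero_div]
        rw [Complex.exp_log (h0 p hp), hΦ0 x hx]
      | succ j ih =>
        have hj' : j ≤ N := Nat.le_of_succ_le hj
        have hjlt : j < N := hj
        rw [show (((j+1:ℕ)):ℝ) = (j:ℝ)+1 from by push_cast; ring]
        rw [Finset.sum_range_succ, ← add_assoc, Complex.exp_add, ih hj']
        have hne1 : f (Φ x (((j:ℝ)+1)/N)) ≠ 0 := by
          have := hu0 x hx (j+1) hj
          rwa [Nat.cast_add, Nat.cast_one] at this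
        have hne2 : f (Φ x ((j:ℝ)/N)) ≠ 0 := hu0 x hx j hj'
        rw [Complex.exp_log (div_ne_zero hne1 hne2)]
        field_simp
    have := key N (le_refl N)
    rwa [div_self hN0.ne', hΦ1 x hx] at this

/-- Glue two continuous logarithms along a connected intersection. -/
lemma glue_lift {s₁ s₂ : Set α} (h₁ : IsClosed s₁) (h₂ : IsClosed s₂)
    {f g₁ g₂ : α → ℂ} (hg₁ : ContinuousOn g₁ s₁) (hg₂ : ContinuousOn g₂ s₂)
    (hl₁ : ∀ x ∈ s₁, Complex.exp (g₁ x) = f x) (hl₂ : ∀ x ∈ s₂, Complex.exp (g₂ x) = f x)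
    (hcon : IsPreconnected (s₁ ∩ s₂)) (hne : (s₁ ∩ s₂).Nonempty) :
    ∃ g : α → ℂ, ContinuousOn g (s₁ ∪ s₂) ∧ ∀ x ∈ s₁ ∪ s₂, Complex.exp (g x) = f x := by
  classical
  obtain ⟨z₀, hz₁, hz₂⟩ := hne
  have hee : Complex.exp (g₁ z₀) = Complex.exp (g₂ z₀) := by
    rw [hl₁ z₀ hz₁, hl₂ z₀ hz₂]
  obtain ⟨Nz, hNz⟩ := Complex.exp_eq_exp_iff_exists_int.1 hee
  set g₂' : α → ℂ := fun x => g₂ x + Nz * (2 * Real.pi * Complex.I) with hg₂'def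
  have hg₂'c : ContinuousOn g₂' s₂ := hg₂.add continuousOn_const
  have hl₂' : ∀ x ∈ s₂, Complex.exp (g₂' x) = f x := by
    intro x hx
    rw [hg₂'def]
    simp only
    rw [Complex.exp_add, Complex.exp_int_mul_two_pi_mul_I, mul_one, hl₂ x hx]
  have heq : EqOn g₁ g₂' (s₁ ∩ s₂) := by
    have hΔc : ContinuousOn (fun x => g₁ x - g₂' x) (s₁ ∩ s₂) :=
      (hg₁.mono inter_subset_left).sub (hg₂'c.mono inter_subset_right)
    have hΔint : ∀ x ∈ s₁ ∩ s₂, ∃ mm : ℤ, g₁ x - g₂' x = mm * (2 * Real.pi * Complex.I) := by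
      intro x hx
      have : Complex.exp (g₁ x - g₂' x) = 1 := by
        rw [Complex.exp_sub, hl₁ x hx.1, hl₂' x hx.2, div_self]
        rw [← hl₁ x hx.1]
        exact Complex.exp_ne_zero _
      exact Complex.exp_eq_one_iff.1 this
    have hconst := int_const_complex hcon hΔc hΔint
    intro x hx
    have h := hconst x hx z₀ ⟨hz₁, hz₂⟩
    have hz : g₁ z₀ - g₂' z₀ = 0 := by rw [hg₂'def]; simp only; rw [hNz]; ring
    rw [hz] at h
    exact sub_eq_zero.1 h
  refine ⟨fun x => if x ∈ s₁ then g₁ x else g₂' x, ?_, ?_⟩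
  · intro x₀ hx₀
    rw [ContinuousWithinAt, nhdsWithin_union, tendsto_sup]
    have hgval : (if x₀ ∈ s₁ then g₁ x₀ else g₂' x₀) =
        if x₀ ∈ s₁ then g₁ x₀ else g₂' x₀ := rfl
    constructor
    · by_cases hx₁ : x₀ ∈ s₁
      · have hcw : Tendsto g₁ (nhdsWithin x₀ s₁) (nhds (g₁ x₀)) := hg₁ x₀ hx₁
        have : (if x₀ ∈ s₁ then g₁ x₀ else g₂' x₀) = g₁ x₀ := if_pos hx₁
        rw [this]
        apply hcw.congr'
        filter_upwards [self_mem_nhdsWithin] with y hy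
        by_cases hy₁ : y ∈ s₁
        · rw [if_pos hy₁]
        · exact absurd hy hy₁
      · have hbot : nhdsWithin x₀ s₁ = ⊥ := by
          rw [← notMem_closure_iff_nhdsWithin_eq_bot, h₁.closure_eq]
          exact hx₁
        rw [hbot]
        exact tendsto_bot
    · by_cases hx₂ : x₀ ∈ s₂
      · have hcw : Tendsto g₂' (nhdsWithin x₀ s₂) (nhds (g₂' x₀)) := hg₂'c x₀ hx₂
        have hval : (if x₀ ∈ s₁ then g₁ x₀ else g₂' x₀) = g₂' x₀ := by
          by_cases hx₁ : x₀ ∈ s₁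
          · rw [if_pos hx₁]; exact heq ⟨hx₁, hx₂⟩
          · rw [if_neg hx₁]
        rw [hval]
        apply hcw.congr'
        filter_upwards [self_mem_nhdsWithin] with y hy
        by_cases hy₁ : y ∈ s₁
        · rw [if_pos hy₁]; exact (heq ⟨hy₁, hy⟩).symm
        · rw [if_neg hy₁]
      · have hbot : nhdsWithin x₀ s₂ = ⊥ := by
          rw [← notMem_closure_iff_nhdsWithin_eq_bot, h₂.closure_eq]
          exact hx₂
        rw [hbot]
        exact tendsto_bot
  · intro x hx
    simp only
    by_cases hx₁ : x ∈ s₁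
    · rw [if_pos hx₁]; exact hl₁ x hx₁
    · rw [if_neg hx₁]
      rcases hx with h | h
      · exact absurd h hx₁
      · exact hl₂' x h

end lifting

open Set Metric Complex Filter Module

section shelllift

variable {E : Type*} [NormedAddCommGroup E] [InnerProductSpace ℝ E] [FiniteDimensional ℝ E]

/-- Lift on a compact half-shell. -/
lemma half_shell_lift (u : E) (hu : ‖u‖ = 1) {a b : ℝ} (ha : 0 < a) (hab : a ≤ b)
    {f : E → ℂ}
    (hf : ContinuousOn f {x : E | ‖x‖ ∈ Icc a b ∧ 0 ≤ (inner ℝ u x : ℝ)})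
    (h0 : ∀ x ∈ {x : E | ‖x‖ ∈ Icc a b ∧ 0 ≤ (inner ℝ u x : ℝ)}, f x ≠ 0) :
    ∃ g : E → ℂ, ContinuousOn g {x : E | ‖x‖ ∈ Icc a b ∧ 0 ≤ (inner ℝ u x : ℝ)} ∧
      ∀ x ∈ {x : E | ‖x‖ ∈ Icc a b ∧ 0 ≤ (inner ℝ u x : ℝ)}, Complex.exp (g x) = f x := by
  set K : Set E := {x : E | ‖x‖ ∈ Icc a b ∧ 0 ≤ (inner ℝ u x : ℝ)} with hKdef
  have hu0 : u ≠ 0 := by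
    intro h; rw [h, norm_zero] at hu; exact one_ne_zero hu.symm
  have hKclosed : IsClosed K := by
    have h1 : IsClosed {x : E | ‖x‖ ∈ Icc a b} :=
      isClosed_Icc.preimage continuous_norm
    have h2 : IsClosed {x : E | 0 ≤ (inner ℝ u x : ℝ)} :=
      isClosed_Ici.preimage (innerSL ℝ u).continuous
    exact h1.inter h2
  have hKcomp : IsCompact K := by
    refine (isCompact_closedBall (0:E) b).of_isClosed_subset hKclosed ?_
    intro x hx
    rw [mem_closedBall_zero_iff]
    exact hx.1.2
  set ψ : E → ℝ → E := fun x t => ((1-t)*a) • u + t • x with hψdef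
  have hψinner : ∀ x t, (inner ℝ u (ψ x t) : ℝ) = (1-t)*a + t * (inner ℝ u x : ℝ) := by
    intro x t
    rw [hψdef]
    simp only [inner_add_right, real_inner_smul_right]
    rw [real_inner_self_eq_norm_sq, hu]
    ring
  have hψne : ∀ x ∈ K, ∀ t ∈ Icc (0:ℝ) 1, ψ x t ≠ 0 := by
    intro x hx t ht h0'
    rcases eq_or_lt_of_le ht.2 with h1 | h1
    · subst h1
      rw [hψdef] at h0'
      norm_num at h0'
      rw [h0'] at hx
      have := hx.1.1
      simp at this
      linarith
    · have : (inner ℝ u (ψ x t) : ℝ) = 0 := by rw [h0', inner_zero_right]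
      rw [hψinner] at this
      have h2 : 0 < (1-t)*a := by nlinarith [ht.1]
      nlinarith [mul_nonneg ht.1 hx.2]
  set c : E → ℝ → ℝ := fun x t => (1-t)*a + t*‖x‖ with hcdef
  have hcpos : ∀ x ∈ K, ∀ t ∈ Icc (0:ℝ) 1, 0 < c x t := by
    intro x hx t ht
    have hxa : a ≤ ‖x‖ := hx.1.1
    rw [hcdef]
    simp only
    nlinarith [ht.1, ht.2]
  set Φ : E → ℝ → E := fun x t => (c x t / ‖ψ x t‖) • ψ x t with hΦdef
  have hΦnorm : ∀ x ∈ K, ∀ t ∈ Icc (0:ℝ) 1, ‖Φ x t‖ = c x t := by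
    intro x hx t ht
    have hψn : 0 < ‖ψ x t‖ := norm_pos_iff.2 (hψne x hx t ht)
    rw [hΦdef]
    simp only
    rw [norm_smul, Real.norm_eq_abs,
      _root_.abs_of_pos (div_pos (hcpos x hx t ht) hψn), div_mul_cancel₀ _ hψn.ne']
  have hΦmem : ∀ x ∈ K, ∀ t ∈ Icc (0:ℝ) 1, Φ x t ∈ K := by
    intro x hx t ht
    have hψn : 0 < ‖ψ x t‖ := norm_pos_iff.2 (hψne x hx t ht)
    refine ⟨?_, ?_⟩
    · rw [hΦnorm x hx t ht]
      have hxa : a ≤ ‖x‖ := hx.1.1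
      have hxb : ‖x‖ ≤ b := hx.1.2
      rw [hcdef]
      constructor
      · simp only; nlinarith [ht.1, ht.2]
      · simp only; nlinarith [ht.1, ht.2]
    · show 0 ≤ (inner ℝ u (Φ x t) : ℝ)
      rw [hΦdef]
      simp only
      rw [real_inner_smul_right, hψinner]
      have h2 : 0 ≤ (1-t)*a + t * (inner ℝ u x : ℝ) := by
        nlinarith [ht.1, ht.2, mul_nonneg ht.1 hx.2]
      exact mul_nonneg (div_nonneg (hcpos x hx t ht).le hψn.le) h2
  have hΦ0 : ∀ x ∈ K, Φ x 0 = a • u := by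
    intro x hx
    rw [hΦdef, hψdef, hcdef]
    simp only
    norm_num
    rw [norm_smul, Real.norm_eq_abs, _root_.abs_of_pos ha, hu, mul_one,
      div_self ha.ne', one_smul]
  have hΦ1 : ∀ x ∈ K, Φ x 1 = x := by
    intro x hx
    rw [hΦdef, hψdef, hcdef]
    simp only
    norm_num
    have hxn : 0 < ‖x‖ := lt_of_lt_of_le ha hx.1.1
    rw [div_self hxn.ne', one_smul]
  have hΦc : ContinuousOn (fun q : E × ℝ => Φ q.1 q.2) (K ×ˢ Icc (0:ℝ) 1) := by
    have hψc : Continuous (fun q : E × ℝ => ψ q.1 q.2) := by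
      rw [hψdef]
      fun_prop
    have hcc : Continuous (fun q : E × ℝ => c q.1 q.2) := by
      rw [hcdef]
      fun_prop
    have hnormne : ∀ q ∈ K ×ˢ Icc (0:ℝ) 1, ‖ψ q.1 q.2‖ ≠ 0 :=
      fun q hq => (norm_pos_iff.2 (hψne q.1 hq.1 q.2 hq.2)).ne'
    exact ContinuousOn.smul
      ((hcc.continuousOn).div ((continuous_norm.comp hψc).continuousOn) hnormne)
      hψc.continuousOn
  exact cone_lift hKcomp hf h0 hΦc hΦmem hΦ0 hΦ1

end shelllift

section shelllift2

variable {E : Type*} [NormedAddCommGroup E] [InnerProductSpace ℝ E] [FiniteDimensional ℝ E]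

/-- Lift on a full compact shell, provided `dim E ≥ 3`. -/
lemma compact_shell_lift (hrank : 3 ≤ finrank ℝ E) {a b : ℝ} (ha : 0 < a) (hab : a ≤ b)
    {f : E → ℂ} (hf : ContinuousOn f {x : E | ‖x‖ ∈ Icc a b})
    (h0 : ∀ x ∈ {x : E | ‖x‖ ∈ Icc a b}, f x ≠ 0) :
    ∃ g : E → ℂ, ContinuousOn g {x : E | ‖x‖ ∈ Icc a b} ∧
      ∀ x ∈ {x : E | ‖x‖ ∈ Icc a b}, Complex.exp (g x) = f x := by
  -- a unit vector
  obtain ⟨v, _, _, hv0⟩ := exists_perp (0 : E) (⊤ : Submodule ℝ E)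
    (by rw [finrank_top]; omega)
  have hvn : 0 < ‖v‖ := norm_pos_iff.2 hv0
  set u : E := ‖v‖⁻¹ • v with hudef
  have hu : ‖u‖ = 1 := by
    rw [hudef, norm_smul, Real.norm_eq_abs, _root_.abs_of_pos (by positivity),
      inv_mul_cancel₀ hvn.ne']
  have hu0 : u ≠ 0 := by
    intro h; rw [h, norm_zero] at hu; exact one_ne_zero hu.symm
  set Kp : Set E := {x : E | ‖x‖ ∈ Icc a b ∧ 0 ≤ (inner ℝ u x : ℝ)} with hKpdef
  set Km : Set E := {x : E | ‖x‖ ∈ Icc a b ∧ 0 ≤ (inner ℝ (-u) x : ℝ)} with hKmdef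
  have hunion : Kp ∪ Km = {x : E | ‖x‖ ∈ Icc a b} := by
    ext x
    simp only [hKpdef, hKmdef, mem_union, mem_setOf_eq, inner_neg_left]
    constructor
    · rintro (⟨h1, _⟩ | ⟨h1, _⟩) <;> exact h1
    · intro h1
      rcases le_total (0:ℝ) (inner ℝ u x : ℝ) with h2 | h2
      · exact Or.inl ⟨h1, h2⟩
      · exact Or.inr ⟨h1, by linarith⟩
  have hinter : Kp ∩ Km = {x : E | ‖x‖ ∈ Icc a b ∧ (inner ℝ u x : ℝ) = 0} := by
    ext x
    simp only [hKpdef, hKmdef, mem_inter_iff, mem_setOf_eq, inner_neg_left]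
    constructor
    · rintro ⟨⟨h1, h2⟩, ⟨_, h3⟩⟩
      exact ⟨h1, le_antisymm (by linarith) h2⟩
    · rintro ⟨h1, h2⟩
      exact ⟨⟨h1, h2.ge⟩, ⟨h1, by rw [h2]; norm_num⟩⟩
  -- the equatorial slab is path-connected
  set T : Submodule ℝ E := (Submodule.span ℝ {u})ᗮ with hTdef
  have hTrank : 2 ≤ finrank ℝ T := by
    have h1 := Submodule.finrank_add_finrank_orthogonal (Submodule.span ℝ {u})
    rw [finrank_span_singleton hu0] at h1
    rw [← hTdef] at h1
    omega
  have hslab : {x : E | ‖x‖ ∈ Icc a b ∧ (inner ℝ u x : ℝ) = 0} =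
      {z : E | z ∈ T ∧ ‖z‖ ∈ Icc a b} := by
    ext x
    rw [hTdef]
    simp only [mem_setOf_eq, Submodule.mem_orthogonal_singleton_iff_inner_right]
    tauto
  obtain ⟨z, hzT, _, hz0⟩ := exists_perp (0 : E) T hTrank
  have hzn : 0 < ‖z‖ := norm_pos_iff.2 hz0
  set z₀ : E := (a/‖z‖) • z with hz₀def
  have hz₀T : z₀ ∈ T := T.smul_mem _ hzT
  have hz₀n : ‖z₀‖ = a := by
    rw [hz₀def, norm_smul, Real.norm_eq_abs, _root_.abs_of_pos (by positivity),
      div_mul_cancel₀ _ hzn.ne']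
  have hslabpc : IsPreconnected {x : E | ‖x‖ ∈ Icc a b ∧ (inner ℝ u x : ℝ) = 0} := by
    rw [hslab]
    have : IsPathConnected {z : E | z ∈ T ∧ ‖z‖ ∈ Icc a b} := by
      refine ⟨z₀, ⟨hz₀T, by rw [hz₀n]; exact ⟨le_refl a, hab⟩⟩, ?_⟩
      intro y hy
      exact (joined_window T hTrank Set.ordConnected_Icc
        (fun r hr => lt_of_lt_of_le ha hr.1) hz₀T hy.1
        (by rw [hz₀n]; exact ⟨le_refl a, hab⟩) hy.2).symm.symm
    exact this.isConnected.isPreconnected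
  have hslabne : {x : E | ‖x‖ ∈ Icc a b ∧ (inner ℝ u x : ℝ) = 0}.Nonempty := by
    refine ⟨z₀, ⟨by rw [hz₀n]; exact ⟨le_refl a, hab⟩, ?_⟩⟩
    rw [hTdef] at hz₀T
    exact Submodule.mem_orthogonal_singleton_iff_inner_right.1 hz₀T
  -- lifts on the two halves
  have hsubp : Kp ⊆ {x : E | ‖x‖ ∈ Icc a b} := fun x hx => hx.1
  have hsubm : Km ⊆ {x : E | ‖x‖ ∈ Icc a b} := fun x hx => hx.1
  obtain ⟨g₁, hg₁c, hg₁l⟩ := half_shell_lift u hu ha hab (hf.mono hsubp)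
    (fun x hx => h0 x (hsubp hx))
  obtain ⟨g₂, hg₂c, hg₂l⟩ := half_shell_lift (-u) (by rw [norm_neg, hu]) ha hab
    (hf.mono hsubm) (fun x hx => h0 x (hsubm hx))
  have hKpclosed : IsClosed Kp := by
    have h1 : IsClosed {x : E | ‖x‖ ∈ Icc a b} := isClosed_Icc.preimage continuous_norm
    have h2 : IsClosed {x : E | 0 ≤ (inner ℝ u x : ℝ)} :=
      isClosed_Ici.preimage (innerSL ℝ u).continuous
    exact h1.inter h2
  have hKmclosed : IsClosed Km := by
    have h1 : IsClosed {x : E | ‖x‖ ∈ Icc a b} := isClosed_Icc.preimage continuous_norm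
    have h2 : IsClosed {x : E | 0 ≤ (inner ℝ (-u) x : ℝ)} :=
      isClosed_Ici.preimage (innerSL ℝ (-u)).continuous
    exact h1.inter h2
  obtain ⟨g, hgc, hgl⟩ := glue_lift hKpclosed hKmclosed hg₁c hg₂c hg₁l hg₂l
    (by rw [hinter]; exact hslabpc) (by rw [hinter]; exact hslabne)
  rw [hunion] at hgc hgl
  exact ⟨g, hgc, hgl⟩

end shelllift2

section shelllift3

variable {E : Type*} [NormedAddCommGroup E] [InnerProductSpace ℝ E] [FiniteDimensional ℝ E]

/-- Every nonvanishing continuous function on an open shell in dimension `≥ 3`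
has a continuous logarithm. -/
lemma shell_lift (hrank : 3 ≤ finrank ℝ E) {l r : ℝ} (hl : 0 < l) (hlr : l < r)
    {f : E → ℂ} (hf : ContinuousOn f {x : E | l < ‖x‖ ∧ ‖x‖ < r})
    (h0 : ∀ x ∈ {x : E | l < ‖x‖ ∧ ‖x‖ < r}, f x ≠ 0) :
    ∃ g : E → ℂ, ContinuousOn g {x : E | l < ‖x‖ ∧ ‖x‖ < r} ∧
      ∀ x ∈ {x : E | l < ‖x‖ ∧ ‖x‖ < r}, Complex.exp (g x) = f x := by
  classical
  set X : Set E := {x : E | l < ‖x‖ ∧ ‖x‖ < r} with hXdef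
  set e : ℕ → ℝ := fun m => (r - l)/(2*(m+2)) with hedef
  have he_pos : ∀ m, 0 < e m := by
    intro m; rw [hedef]; simp only
    have h2 : (0:ℝ) < 2*((m:ℝ) + 2) := by positivity
    exact div_pos (by linarith) h2
  have he_anti : ∀ m m', m ≤ m' → e m' ≤ e m := by
    intro m m' h
    rw [hedef]
    simp only
    apply div_le_div_of_nonneg_left (by linarith) (by positivity)
    have : (m:ℝ) ≤ (m':ℝ) := by exact_mod_cast h
    linarith
  have he_quarter : ∀ m, e m ≤ (r - l)/4 := by
    intro m
    rw [hedef]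
    apply div_le_div_of_nonneg_left (by linarith) (by norm_num)
    have : (0:ℝ) ≤ (m:ℝ) := Nat.cast_nonneg m
    linarith
  set A : ℕ → ℝ := fun m => l + e m with hAdef
  set B : ℕ → ℝ := fun m => r - e m with hBdef
  set K : ℕ → Set E := fun m => {x : E | ‖x‖ ∈ Icc (A m) (B m)} with hKdef
  have hAB : ∀ m, A m ≤ B m := by
    intro m
    have h1 := he_quarter m
    rw [hAdef, hBdef]
    simp only
    linarith
  have hA0 : ∀ m, 0 < A m := fun m => by
    rw [hAdef]; simp only; linarith [he_pos m]
  have hKX : ∀ m, K m ⊆ X := by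
    intro m x hx
    rw [hKdef] at hx
    rw [hXdef]
    constructor
    · calc l < A m := by rw [hAdef]; simp only; linarith [he_pos m]
        _ ≤ ‖x‖ := hx.1
    · calc ‖x‖ ≤ B m := hx.2
        _ < r := by rw [hBdef]; simp only; linarith [he_pos m]
  have hKmono : ∀ m m', m ≤ m' → K m ⊆ K m' := by
    intro m m' h x hx
    rw [hKdef] at hx ⊢
    have h1 := he_anti m m' h
    constructor
    · calc A m' ≤ A m := by rw [hAdef]; simp only; linarith
        _ ≤ ‖x‖ := hx.1
    · calc ‖x‖ ≤ B m := hx.2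
        _ ≤ B m' := by rw [hBdef]; simp only; linarith
  have hKpc : ∀ m, IsPreconnected (K m) := by
    intro m
    have heq : K m = {z : E | z ∈ (⊤ : Submodule ℝ E) ∧ ‖z‖ ∈ Icc (A m) (B m)} := by
      ext x; simp [hKdef, Submodule.mem_top]
    rcases (K m).eq_empty_or_nonempty with hemp | ⟨w, hw⟩
    · rw [hemp]; exact isPreconnected_empty
    have : IsPathConnected (K m) := by
      refine ⟨w, hw, ?_⟩
      intro y hy
      have htop : 2 ≤ finrank ℝ (⊤ : Submodule ℝ E) := by rw [finrank_top]; omega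
      have hjw := joined_window (⊤ : Submodule ℝ E) htop Set.ordConnected_Icc
        (fun ρ hρ => lt_of_lt_of_le (hA0 m) hρ.1)
        (Submodule.mem_top) (Submodule.mem_top)
        (by rw [hKdef] at hw; exact hw) (by rw [hKdef] at hy; exact hy)
      refine hjw.mono ?_
      rw [hKdef]
      intro zz hzz
      exact hzz.2
    exact this.isConnected.isPreconnected
  -- base point
  obtain ⟨v, _, _, hv0⟩ := exists_perp (0 : E) (⊤ : Submodule ℝ E)
    (by rw [finrank_top]; omega)
  have hvn : 0 < ‖v‖ := norm_pos_iff.2 hv0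
  set xs : E := ((l+r)/2/‖v‖) • v with hxsdef
  have hxsn : ‖xs‖ = (l+r)/2 := by
    have hlr2 : (0:ℝ) < (l+r)/2 := by linarith
    rw [hxsdef, norm_smul, Real.norm_eq_abs,
      _root_.abs_of_pos (div_pos hlr2 hvn), div_mul_cancel₀ _ hvn.ne']
  have hxsK : ∀ m, xs ∈ K m := by
    intro m
    rw [hKdef]
    have h1 := he_quarter m
    have h2 := he_pos m
    constructor <;> rw [hxsn] <;> [rw [hAdef]; rw [hBdef]] <;> simp only <;> linarith
  have hxsX : xs ∈ X := hKX 0 (hxsK 0)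
  -- lifts on the K m, normalized at xs
  have hlift : ∀ m, ∃ g : E → ℂ, ContinuousOn g (K m) ∧
      (∀ x ∈ K m, Complex.exp (g x) = f x) ∧ g xs = Complex.log (f xs) := by
    intro m
    obtain ⟨g, hgc, hgl⟩ := compact_shell_lift hrank (hA0 m) (hAB m)
      (hf.mono (hKX m)) (fun x hx => h0 x (hKX m hx))
    refine ⟨fun x => g x - g xs + Complex.log (f xs), ?_, ?_, by ring⟩
    · exact (hgc.sub continuousOn_const).add continuousOn_const
    · intro x hx
      rw [Complex.exp_add, Complex.exp_sub, hgl x hx, hgl xs (hxsK m),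
        Complex.exp_log (h0 xs hxsX)]
      rw [div_mul_cancel₀ _ (h0 xs hxsX)]
  choose gg hggc hggl hggs using hlift
  -- agreement
  have hagree : ∀ m m', m ≤ m' → EqOn (gg m) (gg m') (K m) := by
    intro m m' hmm
    have hΔc : ContinuousOn (fun x => gg m x - gg m' x) (K m) :=
      (hggc m).sub ((hggc m').mono (hKmono m m' hmm))
    have hΔint : ∀ x ∈ K m, ∃ mm : ℤ, gg m x - gg m' x = mm * (2 * Real.pi * Complex.I) := by
      intro x hx
      apply Complex.exp_eq_one_iff.1
      rw [Complex.exp_sub, hggl m x hx, hggl m' x (hKmono m m' hmm hx), div_self]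
      rw [← hggl m x hx]
      exact Complex.exp_ne_zero _
    intro x hx
    have := int_const_complex (hKpc m) hΔc hΔint x hx xs (hxsK m)
    rw [hggs m, hggs m'] at this
    simp only [sub_self] at this
    exact sub_eq_zero.1 this
  have hagree' : ∀ x, ∀ m m', x ∈ K m → x ∈ K m' → gg m x = gg m' x := by
    intro x m m' hm hm'
    rcases le_total m m' with h | h
    · exact hagree m m' h hm
    · exact (hagree m' m h hm').symm
  -- the global lift
  have hex : ∀ x ∈ X, ∃ m, x ∈ K m := by
    intro x hx
    rw [hXdef] at hx
    set t : ℝ := min (‖x‖ - l) (r - ‖x‖) with htdef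
    have ht : 0 < t := lt_min (by linarith [hx.1]) (by linarith [hx.2])
    obtain ⟨m, hm⟩ := exists_nat_gt ((r - l)/(2*t))
    refine ⟨m, ?_⟩
    have hem : e m < t := by
      rw [hedef]
      rw [div_lt_iff₀ (by positivity)]
      have h2 : (r - l)/(2*t) < m + 2 := by
        have : (m:ℝ) ≤ (m:ℝ) + 2 := by linarith
        linarith
      calc r - l = ((r-l)/(2*t)) * (2*t) := by field_simp
        _ < ((m:ℝ)+2) * (2*t) := by
            apply mul_lt_mul_of_pos_right h2 (by positivity)
        _ = t * (2*((m:ℝ)+2)) := by ring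
    rw [hKdef]
    have h1 : t ≤ ‖x‖ - l := min_le_left _ _
    have h2 : t ≤ r - ‖x‖ := min_le_right _ _
    constructor
    · rw [hAdef]; simp only; linarith
    · rw [hBdef]; simp only; linarith
  set g : E → ℂ := fun x => if hx : ∃ m, x ∈ K m then gg (Nat.find hx) x else 0 with hgdef
  have hgval : ∀ x, ∀ m, x ∈ K m → g x = gg m x := by
    intro x m hm
    rw [hgdef]
    simp only
    have hh : ∃ m', x ∈ K m' := ⟨m, hm⟩
    rw [dif_pos hh]
    exact hagree' x (Nat.find hh) m (Nat.find_spec hh) hm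
  refine ⟨g, ?_, ?_⟩
  · intro x₀ hx₀
    -- find m with x₀ strictly inside K m
    have hx₀' : l < ‖x₀‖ ∧ ‖x₀‖ < r := hx₀
    set t : ℝ := min (‖x₀‖ - l) (r - ‖x₀‖) with htdef
    have ht : 0 < t := lt_min (by linarith [hx₀'.1]) (by linarith [hx₀'.2])
    obtain ⟨m, hm⟩ := exists_nat_gt ((r - l)/(2*t))
    have hem : e m < t := by
      rw [hedef]
      rw [div_lt_iff₀ (by positivity)]
      have h2 : (r - l)/(2*t) < m + 2 := by
        have : (m:ℝ) ≤ (m:ℝ) + 2 := by linarith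
        linarith
      calc r - l = ((r-l)/(2*t)) * (2*t) := by field_simp
        _ < ((m:ℝ)+2) * (2*t) := by
            apply mul_lt_mul_of_pos_right h2 (by positivity)
        _ = t * (2*((m:ℝ)+2)) := by ring
    have h1 : t ≤ ‖x₀‖ - l := min_le_left _ _
    have h2 : t ≤ r - ‖x₀‖ := min_le_right _ _
    set O : Set E := {x : E | A m < ‖x‖ ∧ ‖x‖ < B m} with hOdef
    have hOopen : IsOpen O := by
      have : O = (fun x : E => ‖x‖) ⁻¹' (Ioo (A m) (B m)) := by
        ext x; simp [hOdef, mem_Ioo]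
      rw [this]
      exact isOpen_Ioo.preimage continuous_norm
    have hx₀O : x₀ ∈ O := by
      rw [hOdef]
      constructor
      · rw [hAdef]; simp only; linarith
      · rw [hBdef]; simp only; linarith
    have hOK : O ⊆ K m := by
      intro x hx
      rw [hOdef] at hx
      rw [hKdef]
      exact ⟨hx.1.le, hx.2.le⟩
    have hx₀K : x₀ ∈ K m := hOK hx₀O
    have hcw : ContinuousWithinAt (gg m) (K m) x₀ := (hggc m) x₀ hx₀K
    have hcw2 : ContinuousWithinAt (gg m) X x₀ := by
      rw [ContinuousWithinAt] at hcw ⊢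
      rw [nhdsWithin_restrict' X (hOopen.mem_nhds hx₀O)]
      exact hcw.mono_left (nhdsWithin_mono _ (fun y hy => hOK hy.2))
    have : ContinuousWithinAt g X x₀ := by
      rw [ContinuousWithinAt]
      rw [hgval x₀ m hx₀K]
      rw [ContinuousWithinAt] at hcw2
      apply hcw2.congr'
      rw [nhdsWithin_restrict' X (hOopen.mem_nhds hx₀O)]
      filter_upwards [self_mem_nhdsWithin] with y hy
      exact (hgval y m (hOK hy.2)).symm
    exact this
  · intro x hx
    obtain ⟨m, hm⟩ := hex x hx
    rw [hgval x m hm]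
    exact hggl m x hm

end shelllift3

open Set Metric Complex Filter Module

section keylemma

variable {α : Type*} [MetricSpace α]

lemma int_const_complex' {F : α → ℂ} {s : Set α} (hs : IsPreconnected s)
    (hF : ContinuousOn F s) (hint : ∀ x ∈ s, ∃ m : ℤ, F x = (m:ℂ)) :
    ∀ x ∈ s, ∀ y ∈ s, F x = F y := by
  intro x hx y hy
  have hre : ContinuousOn (fun z => (F z).re) s := Complex.continuous_re.comp_continuousOn hF
  have hi : ∀ z ∈ s, ∃ m : ℤ, (F z).re = (m:ℝ) := by
    intro z hz
    obtain ⟨m, hm⟩ := hint z hz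
    exact ⟨m, by rw [hm]; simp⟩
  have h := int_const hs hre hi x hx y hy
  obtain ⟨mx, hmx⟩ := hint x hx
  obtain ⟨my, hmy⟩ := hint y hy
  rw [hmx, hmy] at h ⊢
  simp only [Complex.intCast_re] at h
  have : mx = my := by exact_mod_cast h
  rw [this]

variable {E : Type*} [NormedAddCommGroup E] [InnerProductSpace ℝ E] [FiniteDimensional ℝ E]

/-- Key step: removing two disjoint relatively closed sets with connected complements
from an open shell leaves a connected set. -/
lemma key_two (hrank : 3 ≤ finrank ℝ E) {l r : ℝ} (hl : 0 < l) (hlr : l < r)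
    {A B CA CB : Set E} (hCA : IsClosed CA) (hCB : IsClosed CB)
    (hA : A = {x : E | l < ‖x‖ ∧ ‖x‖ < r} ∩ CA)
    (hB : B = {x : E | l < ‖x‖ ∧ ‖x‖ < r} ∩ CB)
    (hdisj : Disjoint A B)
    (hcA : IsConnected ({x : E | l < ‖x‖ ∧ ‖x‖ < r} \ A))
    (hcB : IsConnected ({x : E | l < ‖x‖ ∧ ‖x‖ < r} \ B)) :
    IsConnected ({x : E | l < ‖x‖ ∧ ‖x‖ < r} \ (A ∪ B)) := by
  classical
  set X : Set E := {x : E | l < ‖x‖ ∧ ‖x‖ < r} with hXdef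
  -- trivial cases
  rcases A.eq_empty_or_nonempty with hAe | hAne
  · rw [hAe, empty_union]; exact hcB
  rcases B.eq_empty_or_nonempty with hBe | hBne
  · rw [hBe, union_empty]; exact hcA
  have hXopen : IsOpen X := by
    have : X = (fun x : E => ‖x‖) ⁻¹' (Ioo l r) := by ext x; simp [hXdef, mem_Ioo]
    rw [this]; exact isOpen_Ioo.preimage continuous_norm
  have hAX : A ⊆ X := by rw [hA]; exact inter_subset_left
  have hBX : B ⊆ X := by rw [hB]; exact inter_subset_left
  have hclA : ∀ x ∈ X, x ∈ closure A → x ∈ A := by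
    intro x hx hxc
    have : closure A ⊆ CA := by
      rw [hA]; exact hCA.closure_subset_iff.2 inter_subset_right
    rw [hA]; exact ⟨hx, this hxc⟩
  have hclB : ∀ x ∈ X, x ∈ closure B → x ∈ B := by
    intro x hx hxc
    have : closure B ⊆ CB := by
      rw [hB]; exact hCB.closure_subset_iff.2 inter_subset_right
    rw [hB]; exact ⟨hx, this hxc⟩
  set W : Set E := X \ (A ∪ B) with hWdef
  have hWopen : IsOpen W := by
    have : W = X ∩ (CA ∪ CB)ᶜ := by
      ext x
      simp only [hWdef, mem_diff, mem_union, mem_compl_iff, mem_inter_iff, hA, hB]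
      constructor
      · rintro ⟨hx, hn⟩
        refine ⟨hx, ?_⟩
        rintro (h | h)
        · exact hn (Or.inl ⟨hx, h⟩)
        · exact hn (Or.inr ⟨hx, h⟩)
      · rintro ⟨hx, hn⟩
        exact ⟨hx, by rintro (⟨_, h⟩ | ⟨_, h⟩) <;> exact hn (by tauto)⟩
    rw [this]
    exact hXopen.inter (hCA.union hCB).isOpen_compl
  -- W is nonempty
  have hUne : (X \ B).Nonempty := hcB.nonempty
  have hVne : (X \ A).Nonempty := hcA.nonempty
  have hXpc : IsPreconnected X := by
    rcases X.eq_empty_or_nonempty with hXe | ⟨w, hw⟩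
    · rw [hXe]; exact isPreconnected_empty
    have htop : 2 ≤ finrank ℝ (⊤ : Submodule ℝ E) := by rw [finrank_top]; omega
    have : IsPathConnected X := by
      refine ⟨w, hw, ?_⟩
      intro y hy
      have hjw := joined_window (⊤ : Submodule ℝ E) htop Set.ordConnected_Ioo
        (fun ρ hρ => lt_trans hl hρ.1) (Submodule.mem_top) (Submodule.mem_top)
        (by exact ⟨hw.1, hw.2⟩) (by exact ⟨hy.1, hy.2⟩)
      exact hjw.mono (fun z hz => hz.2)
    exact this.isConnected.isPreconnected
  have hWne : W.Nonempty := by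
    by_contra hne
    rw [not_nonempty_iff_eq_empty] at hne
    have hcov : X ⊆ (X \ B) ∪ (X \ A) := by
      intro x hx
      by_cases hxB : x ∈ B
      · right
        refine ⟨hx, fun hxA => ?_⟩
        exact (hdisj.ne_of_mem hxA hxB) rfl
      · exact Or.inl ⟨hx, hxB⟩
    have hopen1 : IsOpen (X \ B) := by
      have : X \ B = X ∩ CBᶜ := by
        ext x
        simp only [mem_diff, hB, mem_inter_iff, mem_compl_iff]
        tauto
      rw [this]; exact hXopen.inter hCB.isOpen_compl
    have hopen2 : IsOpen (X \ A) := by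
      have : X \ A = X ∩ CAᶜ := by
        ext x
        simp only [mem_diff, hA, mem_inter_iff, mem_compl_iff]
        tauto
      rw [this]; exact hXopen.inter hCA.isOpen_compl
    have hne1 : (X ∩ (X \ B)).Nonempty := by
      obtain ⟨x, hx⟩ := hUne; exact ⟨x, hx.1, hx⟩
    have hne2 : (X ∩ (X \ A)).Nonempty := by
      obtain ⟨x, hx⟩ := hVne; exact ⟨x, hx.1, hx⟩
    obtain ⟨x, hx⟩ := hXpc _ _ hopen1 hopen2 hcov hne1 hne2
    have : x ∈ W := by
      refine ⟨hx.1, ?_⟩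
      rintro (h | h)
      · exact hx.2.2.2 h
      · exact hx.2.1.2 h
    rw [hne] at this
    exact this
  refine ⟨hWne, ?_⟩
  by_contra hnc
  rw [IsPreconnected] at hnc
  push_neg at hnc
  obtain ⟨u, v, huo, hvo, hcov, hne1, hne2, hdis⟩ := hnc
  set P : Set E := W ∩ u with hPdef
  set Q : Set E := W ∩ v with hQdef
  have hPopen : IsOpen P := hWopen.inter huo
  have hQopen : IsOpen Q := hWopen.inter hvo
  have hPQ : P ∪ Q = W := by
    rw [hPdef, hQdef, ← inter_union_distrib_left]
    exact inter_eq_self_of_subset_left hcov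
  have hPQdisj : P ∩ Q = ∅ := by
    apply eq_empty_of_subset_empty
    rw [← hdis]
    intro x hx
    exact ⟨hx.1.1, hx.1.2, hx.2.2⟩
  have hPsub : P ⊆ X := fun x hx => hx.1.1
  have hQsub : Q ⊆ X := fun x hx => hx.1.1
  have hPW : P ⊆ W := inter_subset_left
  have hQW : Q ⊆ W := inter_subset_left
  -- the Urysohn-type function
  set h : E → ℝ := fun x => infDist x A / (infDist x A + infDist x B) with hhdef
  have hden : ∀ x ∈ X, 0 < infDist x A + infDist x B := by
    intro x hx
    rcases (infDist_nonneg (s := A) (x := x)).lt_or_eq with h1 | h1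
    · linarith [infDist_nonneg (s := B) (x := x)]
    rcases (infDist_nonneg (s := B) (x := x)).lt_or_eq with h2 | h2
    · linarith
    exfalso
    have hxA : x ∈ A := hclA x hx ((mem_closure_iff_infDist_zero hAne).2 h1.symm)
    have hxB : x ∈ B := hclB x hx ((mem_closure_iff_infDist_zero hBne).2 h2.symm)
    exact (hdisj.ne_of_mem hxA hxB) rfl
  have h0A : ∀ x ∈ A, h x = 0 := by
    intro x hx
    rw [hhdef]
    simp only
    rw [infDist_zero_of_mem hx, zero_div]
  have h1B : ∀ x ∈ B, h x = 1 := by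
    intro x hx
    have hdB : infDist x B = 0 := infDist_zero_of_mem hx
    have hdA : 0 < infDist x A := by
      rcases (infDist_nonneg (s := A) (x := x)).lt_or_eq with h1 | h1
      · exact h1
      exfalso
      have hxA : x ∈ A := hclA x (hBX hx) ((mem_closure_iff_infDist_zero hAne).2 h1.symm)
      exact (hdisj.ne_of_mem hxA hx) rfl
    rw [hhdef]
    simp only
    rw [hdB, add_zero, div_self hdA.ne']
  have hhc : ContinuousOn h X := by
    apply ContinuousOn.div
    · exact (continuous_infDist_pt A).continuousOn
    · exact ((continuous_infDist_pt A).add (continuous_infDist_pt B)).continuousOn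
    · exact fun x hx => (hden x hx).ne'
  -- the circle-valued function and its branches
  set F₁ : E → ℂ := fun x => Complex.exp ((Real.pi * h x : ℝ) * Complex.I) with hF₁def
  set F₂ : E → ℂ := fun x => Complex.exp (-((Real.pi * h x : ℝ) * Complex.I)) with hF₂def
  have hF₁c : ContinuousOn F₁ X := by
    apply ContinuousOn.cexp
    exact (Complex.continuous_ofReal.comp_continuousOn
      (continuousOn_const.mul hhc)).mul continuousOn_const
  have hF₂c : ContinuousOn F₂ X := by
    apply ContinuousOn.cexp
    exact ((Complex.continuous_ofReal.comp_continuousOn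
      (continuousOn_const.mul hhc)).mul continuousOn_const).neg
  have hePt : ∀ x ∈ A ∪ B, F₁ x = F₂ x := by
    rintro x (hx | hx)
    · rw [hF₁def, hF₂def]; simp only [h0A x hx]
      norm_num
    · rw [hF₁def, hF₂def]; simp only [h1B x hx]
      norm_num
  set f : E → ℂ := fun x => if x ∈ Q then F₂ x else F₁ x with hfdef
  have hfor : ∀ x, f x = F₁ x ∨ f x = F₂ x := by
    intro x
    rw [hfdef]
    by_cases hx : x ∈ Q
    · exact Or.inr (if_pos hx)
    · exact Or.inl (if_neg hx)
  have hWPQ : ∀ x ∈ X, x ∉ A ∪ B → x ∈ P ∪ Q := by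
    intro x hx hn
    rw [hPQ]
    exact ⟨hx, hn⟩
  have hbdQ : ∀ x ∈ X, x ∈ closure Q → x ∉ Q → x ∈ A ∪ B := by
    intro x hx hcl hq
    by_contra hn
    rcases hWPQ x hx hn with hp | hq'
    · obtain ⟨y, hy⟩ := mem_closure_iff.1 hcl P hPopen hp
      have : y ∈ P ∩ Q := ⟨hy.1, hy.2⟩
      rw [hPQdisj] at this
      exact this
    · exact hq hq'
  have hbdP : ∀ x ∈ X, x ∈ closure P → x ∉ P → x ∈ A ∪ B := by
    intro x hx hcl hp
    by_contra hn
    rcases hWPQ x hx hn with hp' | hq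
    · exact hp hp'
    · obtain ⟨y, hy⟩ := mem_closure_iff.1 hcl Q hQopen hq
      have : y ∈ P ∩ Q := ⟨hy.2, hy.1⟩
      rw [hPQdisj] at this
      exact this
  have hfc : ContinuousOn f X := by
    intro x₀ hx₀
    by_cases hq : x₀ ∈ Q
    · refine (hF₂c x₀ hx₀).congr_of_eventuallyEq ?_ (if_pos hq)
      filter_upwards [mem_nhdsWithin_of_mem_nhds (hQopen.mem_nhds hq)] with y hy
      exact if_pos hy
    by_cases hcl : x₀ ∈ closure Q
    · have hab : x₀ ∈ A ∪ B := hbdQ x₀ hx₀ hcl hq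
      have he := hePt x₀ hab
      refine sq_helper (hF₁c x₀ hx₀) (hF₂c x₀ hx₀) (fun x _ => hfor x) he ?_
      rw [hfdef]
      exact if_neg hq
    · have hopen : IsOpen (closure Q)ᶜ := isClosed_closure.isOpen_compl
      refine (hF₁c x₀ hx₀).congr_of_eventuallyEq ?_ (if_neg hq)
      filter_upwards [mem_nhdsWithin_of_mem_nhds (hopen.mem_nhds hcl)] with y hy
      exact if_neg (fun hyq => hy (subset_closure hyq))
  have hf0 : ∀ x ∈ X, f x ≠ 0 := by
    intro x _
    rcases hfor x with h' | h' <;> rw [h'] <;> exact Complex.exp_ne_zero _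
  -- the logarithm
  obtain ⟨g, hgc, hgl⟩ := shell_lift hrank hl hlr hfc hf0
  -- the two integer-valued combinations
  have hπ : ((Real.pi : ℂ)) ≠ 0 := Complex.ofReal_ne_zero.2 Real.pi_ne_zero
  have hI : Complex.I ≠ 0 := Complex.I_ne_zero
  set alf : E → ℂ := fun x => (g x - (Real.pi * h x : ℝ) * Complex.I) /
    (2 * Real.pi * Complex.I) with halfdef
  set bet : E → ℂ := fun x => (g x + (Real.pi * h x : ℝ) * Complex.I) /
    (2 * Real.pi * Complex.I) with hbetdef
  have halfc : ContinuousOn alf X := by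
    apply ContinuousOn.div_const
    exact hgc.sub ((Complex.continuous_ofReal.comp_continuousOn
      (continuousOn_const.mul hhc)).mul continuousOn_const)
  have hbetc : ContinuousOn bet X := by
    apply ContinuousOn.div_const
    exact hgc.add ((Complex.continuous_ofReal.comp_continuousOn
      (continuousOn_const.mul hhc)).mul continuousOn_const)
  have hD : (2*(Real.pi:ℂ)*Complex.I) ≠ 0 := by simp [hπ, hI]
  have hdiffab : ∀ x, bet x = alf x + ((h x : ℝ) : ℂ) := by
    intro x
    rw [halfdef, hbetdef]
    simp only
    field_simp
    push_cast
    ring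
  have halfint : ∀ x ∈ X, x ∉ Q → ∃ m : ℤ, alf x = (m:ℂ) := by
    intro x hx hq
    have hfx : f x = F₁ x := if_neg hq
    have : Complex.exp (g x) = Complex.exp ((Real.pi * h x : ℝ) * Complex.I) := by
      rw [hgl x hx, hfx, hF₁def]
    obtain ⟨n, hn⟩ := Complex.exp_eq_exp_iff_exists_int.1 this
    refine ⟨n, ?_⟩
    rw [halfdef]
    simp only
    rw [hn]
    field_simp
    try ring
  have hfF2 : ∀ x ∈ X, x ∉ P → f x = F₂ x := by
    intro x hx hp
    by_cases hq : x ∈ Q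
    · exact if_pos hq
    · have hab : x ∈ A ∪ B := by
        by_contra hn
        rcases hWPQ x hx hn with h' | h'
        · exact hp h'
        · exact hq h'
      have hfx : f x = F₁ x := if_neg hq
      rw [hfx]
      exact hePt x hab
  have hbetint : ∀ x ∈ X, x ∉ P → ∃ m : ℤ, bet x = (m:ℂ) := by
    intro x hx hp
    have : Complex.exp (g x) = Complex.exp (-((Real.pi * h x : ℝ) * Complex.I)) := by
      rw [hgl x hx, hfF2 x hx hp, hF₂def]
    obtain ⟨n, hn⟩ := Complex.exp_eq_exp_iff_exists_int.1 this
    refine ⟨n, ?_⟩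
    rw [hbetdef]
    simp only
    rw [hn]
    field_simp
    try ring
  -- the pieced integer functions
  set U : Set E := X \ B with hUdef
  set V : Set E := X \ A with hVdef
  have hUX : U ⊆ X := fun x hx => hx.1
  have hVX : V ⊆ X := fun x hx => hx.1
  have hWU : W ⊆ U := fun x hx => ⟨hx.1, fun hb => hx.2 (Or.inr hb)⟩
  have hWV : W ⊆ V := fun x hx => ⟨hx.1, fun ha => hx.2 (Or.inl ha)⟩
  set c1 : E → ℂ := fun x => if x ∈ Q then bet x else alf x with hc1def
  set c2 : E → ℂ := fun x => if x ∈ P then alf x + 1 else bet x with hc2def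
  have hc1int : ∀ x ∈ U, ∃ m : ℤ, c1 x = (m:ℂ) := by
    intro x hx
    by_cases hq : x ∈ Q
    · have hcv : c1 x = bet x := if_pos hq
      rw [hcv]
      apply hbetint x (hUX hx)
      intro hp
      have : x ∈ P ∩ Q := ⟨hp, hq⟩
      rw [hPQdisj] at this
      exact this
    · have hcv : c1 x = alf x := if_neg hq
      rw [hcv]
      exact halfint x (hUX hx) hq
  have hc2int : ∀ x ∈ V, ∃ m : ℤ, c2 x = (m:ℂ) := by
    intro x hx
    by_cases hp : x ∈ P
    · have hcv : c2 x = alf x + 1 := if_pos hp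
      rw [hcv]
      obtain ⟨m, hm⟩ := halfint x (hVX hx) (fun hq => by
        have : x ∈ P ∩ Q := ⟨hp, hq⟩
        rw [hPQdisj] at this
        exact this)
      exact ⟨m + 1, by rw [hm]; push_cast; ring⟩
    · have hcv : c2 x = bet x := if_neg hp
      rw [hcv]
      exact hbetint x (hVX hx) hp
  have hc1c : ContinuousOn c1 U := by
    intro x₀ hx₀
    have hx₀X : x₀ ∈ X := hUX hx₀
    by_cases hq : x₀ ∈ Q
    · refine ((hbetc.mono hUX) x₀ hx₀).congr_of_eventuallyEq ?_ (if_pos hq)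
      filter_upwards [mem_nhdsWithin_of_mem_nhds (hQopen.mem_nhds hq)] with y hy
      exact if_pos hy
    by_cases hcl : x₀ ∈ closure Q
    · have hab : x₀ ∈ A ∪ B := hbdQ x₀ hx₀X hcl hq
      have hxA : x₀ ∈ A := by
        rcases hab with h' | h'
        · exact h'
        · exact absurd h' hx₀.2
      have he : alf x₀ = bet x₀ := by
        rw [hdiffab x₀, h0A x₀ hxA]
        simp
      refine sq_helper ((halfc.mono hUX) x₀ hx₀) ((hbetc.mono hUX) x₀ hx₀)
        (fun x _ => ?_) he (if_neg hq)
      by_cases h' : x ∈ Q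
      · exact Or.inr (if_pos h')
      · exact Or.inl (if_neg h')
    · have hopen : IsOpen (closure Q)ᶜ := isClosed_closure.isOpen_compl
      refine ((halfc.mono hUX) x₀ hx₀).congr_of_eventuallyEq ?_ (if_neg hq)
      filter_upwards [mem_nhdsWithin_of_mem_nhds (hopen.mem_nhds hcl)] with y hy
      exact if_neg (fun hyq => hy (subset_closure hyq))
  have hc2c : ContinuousOn c2 V := by
    intro x₀ hx₀
    have hx₀X : x₀ ∈ X := hVX hx₀
    have halfc1 : ContinuousOn (fun x => alf x + 1) X := halfc.add continuousOn_const
    by_cases hp : x₀ ∈ P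
    · refine ((halfc1.mono hVX) x₀ hx₀).congr_of_eventuallyEq ?_ (if_pos hp)
      filter_upwards [mem_nhdsWithin_of_mem_nhds (hPopen.mem_nhds hp)] with y hy
      exact if_pos hy
    by_cases hcl : x₀ ∈ closure P
    · have hab : x₀ ∈ A ∪ B := hbdP x₀ hx₀X hcl hp
      have hxB : x₀ ∈ B := by
        rcases hab with h' | h'
        · exact absurd h' hx₀.2
        · exact h'
      have he : alf x₀ + 1 = bet x₀ := by
        rw [hdiffab x₀, h1B x₀ hxB]
        simp
      refine sq_helper ((halfc1.mono hVX) x₀ hx₀) ((hbetc.mono hVX) x₀ hx₀)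
        (fun x _ => ?_) he ((if_neg hp).trans he.symm)
      by_cases h' : x ∈ P
      · exact Or.inl (if_pos h')
      · exact Or.inr (if_neg h')
    · have hopen : IsOpen (closure P)ᶜ := isClosed_closure.isOpen_compl
      refine ((hbetc.mono hVX) x₀ hx₀).congr_of_eventuallyEq ?_ (if_neg hp)
      filter_upwards [mem_nhdsWithin_of_mem_nhds (hopen.mem_nhds hcl)] with y hy
      exact if_neg (fun hyp => hy (subset_closure hyp))
  -- constancy and the contradiction
  obtain ⟨p, hp⟩ := hne1
  obtain ⟨q, hq⟩ := hne2
  have hpP : p ∈ P := hp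
  have hqQ : q ∈ Q := hq
  have hpU : p ∈ U := hWU (hPW hpP)
  have hqU : q ∈ U := hWU (hQW hqQ)
  have hpV : p ∈ V := hWV (hPW hpP)
  have hqV : q ∈ V := hWV (hQW hqQ)
  have hU1 := int_const_complex' hcB.isPreconnected hc1c hc1int p hpU q hqU
  have hV1 := int_const_complex' hcA.isPreconnected hc2c hc2int p hpV q hqV
  have hpnotQ : p ∉ Q := fun hq' => by
    have : p ∈ P ∩ Q := ⟨hpP, hq'⟩
    rw [hPQdisj] at this
    exact this
  have hqnotP : q ∉ P := fun hp' => by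
    have : q ∈ P ∩ Q := ⟨hp', hqQ⟩
    rw [hPQdisj] at this
    exact this
  have e1 : c1 p = alf p := if_neg hpnotQ
  have e2 : c1 q = bet q := if_pos hqQ
  have e3 : c2 p = alf p + 1 := if_pos hpP
  have e4 : c2 q = bet q := if_neg hqnotP
  rw [e1, e2] at hU1
  rw [e3, e4] at hV1
  rw [← hU1] at hV1
  have : (1:ℂ) = 0 := by linear_combination hV1 - hU1 + hU1
  norm_num at this

end keylemma

open Set Metric Complex Filter Module Function

section mainthm

variable {E : Type*} [NormedAddCommGroup E] [InnerProductSpace ℝ E] [FiniteDimensional ℝ E]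

lemma main_aux (hrank : 3 ≤ finrank ℝ E) {l r : ℝ} (hl : 0 < l) (hlr : l < r) :
    ∀ (k : ℕ), 1 ≤ k → ∀ (Z : Fin k → Set E) (C : Fin k → Set E),
      (∀ i, IsClosed (C i)) → (∀ i, Z i = {x : E | l < ‖x‖ ∧ ‖x‖ < r} ∩ C i) →
      Pairwise (Function.onFun Disjoint Z) →
      (∀ i, IsConnected ({x : E | l < ‖x‖ ∧ ‖x‖ < r} \ Z i)) →
      IsConnected ({x : E | l < ‖x‖ ∧ ‖x‖ < r} \ ⋃ i, Z i) := by
  intro k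
  induction k with
  | zero => omega
  | succ n ih =>
    intro _ Z C hCc hZC hdis hcon
    by_cases hn : n = 0
    · subst hn
      have huni : ⋃ i, Z i = Z 0 := by
        ext x
        simp only [mem_iUnion]
        exact ⟨fun ⟨i, hi⟩ => by rwa [show i = 0 from Fin.fin_one_eq_zero i] at hi, fun hx => ⟨0, hx⟩⟩
      rw [huni]
      exact hcon 0
    · have hn1 : 1 ≤ n := Nat.one_le_iff_ne_zero.2 hn
      set A : Set E := ⋃ i : Fin n, Z (Fin.castSucc i) with hAdef
      set B : Set E := Z (Fin.last n) with hBdef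
      have hAeq : A = {x : E | l < ‖x‖ ∧ ‖x‖ < r} ∩ ⋃ i : Fin n, C (Fin.castSucc i) := by
        rw [hAdef]
        calc (⋃ i : Fin n, Z (Fin.castSucc i))
            = ⋃ i : Fin n, ({x : E | l < ‖x‖ ∧ ‖x‖ < r} ∩ C (Fin.castSucc i)) := by
              apply iUnion_congr; intro i; exact hZC _
          _ = {x : E | l < ‖x‖ ∧ ‖x‖ < r} ∩ ⋃ i : Fin n, C (Fin.castSucc i) :=
              (inter_iUnion _ _).symm
      have hCA : IsClosed (⋃ i : Fin n, C (Fin.castSucc i)) :=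
        isClosed_iUnion_of_finite (fun i => hCc _)
      have hdisjAB : Disjoint A B := by
        rw [hAdef, hBdef, Set.disjoint_iUnion_left]
        intro i
        exact hdis (Fin.castSucc_lt_last i).ne
      have hcAconn : IsConnected ({x : E | l < ‖x‖ ∧ ‖x‖ < r} \ A) := by
        rw [hAdef]
        apply ih hn1 (fun i => Z (Fin.castSucc i)) (fun i => C (Fin.castSucc i))
          (fun i => hCc _) (fun i => hZC _)
        · intro i j hij
          exact hdis (fun hc => hij (Fin.castSucc_injective _ hc))
        · intro i
          exact hcon _
      have hkey := key_two hrank hl hlr hCA (hCc (Fin.last n)) hAeq (hZC (Fin.last n))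
        hdisjAB hcAconn (hcon (Fin.last n))
      have huni : ⋃ i, Z i = A ∪ B := by
        rw [hAdef, hBdef]
        ext x
        simp only [mem_iUnion, mem_union]
        constructor
        · rintro ⟨i, hi⟩
          rcases Fin.eq_castSucc_or_eq_last i with ⟨j, hj⟩ | hj
          · exact Or.inl ⟨j, hj ▸ hi⟩
          · exact Or.inr (hj ▸ hi)
        · rintro (⟨j, hj⟩ | hj)
          · exact ⟨_, hj⟩
          · exact ⟨_, hj⟩
      rw [huni]
      exact hkey

end mainthm

/-- Let `X` be the open spherical shell `(int B^{d+1}) \ (1-ε)B^{d+1}` in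
`ℝ^{d+1}`, `d ≥ 2`, `0 < ε < 1`, and let `Z₁, …, Z_k` be pairwise disjoint
subsets of `X`, closed in the subspace topology of `X`, such that `X \ Z_i`
is connected for every `i`.  Then `X \ (Z₁ ∪ ⋯ ∪ Z_k)` is connected. -/
theorem shell_complement_connected (d : ℕ) (hd : 2 ≤ d) (ε : ℝ)
    (hε : ε ∈ Set.Ioo (0 : ℝ) 1)
    (X : Set (EuclideanSpace ℝ (Fin (d + 1))))
    (hX : X = Metric.ball 0 1 \ Metric.closedBall 0 (1 - ε))
    (k : ℕ) (hk : 1 ≤ k) (Z : Fin k → Set (EuclideanSpace ℝ (Fin (d + 1))))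
    (hZX : ∀ i, Z i ⊆ X)
    (hclosed : ∀ i, IsClosed {x : X | (x : EuclideanSpace ℝ (Fin (d + 1))) ∈ Z i})
    (hdisj : Pairwise (Function.onFun Disjoint Z))
    (hconn : ∀ i, IsConnected (X \ Z i)) :
    IsConnected (X \ ⋃ i, Z i) := by
  obtain ⟨hε0, hε1⟩ := hε
  have hrank : 3 ≤ Module.finrank ℝ (EuclideanSpace ℝ (Fin (d + 1))) := by
    rw [finrank_euclideanSpace_fin]
    omega
  have hl : (0:ℝ) < 1 - ε := by linarith
  have hlr : (1:ℝ) - ε < 1 := by linarith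
  have hX' : X = {x : EuclideanSpace ℝ (Fin (d + 1)) | 1 - ε < ‖x‖ ∧ ‖x‖ < 1} := by
    rw [hX]
    ext x
    simp only [Set.mem_diff, Metric.mem_ball, Metric.mem_closedBall, dist_zero_right,
      Set.mem_setOf_eq, not_le]
    tauto
  have hZC : ∀ i, ∃ C, IsClosed C ∧
      Z i = {x : EuclideanSpace ℝ (Fin (d + 1)) | 1 - ε < ‖x‖ ∧ ‖x‖ < 1} ∩ C := by
    intro i
    have hcl := hclosed i
    rw [isClosed_induced_iff] at hcl
    obtain ⟨C, hC, hpre⟩ := hcl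
    refine ⟨C, hC, ?_⟩
    rw [← hX']
    ext x
    constructor
    · intro hx
      have hxX : x ∈ X := hZX i hx
      refine ⟨hxX, ?_⟩
      have : (⟨x, hxX⟩ : X) ∈ {x : X | (x : EuclideanSpace ℝ (Fin (d + 1))) ∈ Z i} := hx
      rw [← hpre] at this
      exact this
    · rintro ⟨hxX, hxC⟩
      have : (⟨x, hxX⟩ : X) ∈ Subtype.val ⁻¹' C := hxC
      rw [hpre] at this
      exact this
  choose C hCc hZC' using hZC
  rw [hX']
  rw [hX'] at hconn
  exact main_aux hrank hl hlr k hk Z C hCc hZC' hdisj hconn
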